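/- Let C be a nonempty closed convex subset of the Hilbert space L²(π) and let Π_C denote the metric projection onto C. Then the map Π_C ∘ T has a unique fixed point V̄ ∈ C (so V̄ = Π_C(T V̄)); moreover, for any V₀ ∈ C, the iterates defined by V_{k+1} = Π_C(T V_k) satisfy ‖V_k − V̄‖_π ≤ α^k ‖V₀ − V̄‖_π for all k ≥ 0. -/

import Mathlib

open MeasureTheory ProbabilityTheory ENNReal RealInnerProductSpace

-- π.bind κ = π from invariance
lemma aux_bind {𝒳 : Type*} [MeasurableSpace 𝒳] (κ : Kernel 𝒳 𝒳)
    (π : Measure 𝒳)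
    (hinv : ∀ B : Set 𝒳, MeasurableSet B → π B = ∫⁻ x, κ x B ∂π) :
    π.bind (fun x => κ x) = π := by
  ext B hB
  rw [Measure.bind_apply hB κ.measurable.aemeasurable, ← hinv B hB]

-- a.e. kernel integrability of square-integrable functions
lemma aux_ae_int {𝒳 : Type*} [MeasurableSpace 𝒳] (κ : Kernel 𝒳 𝒳) [IsMarkovKernel κ]
    (π : Measure 𝒳) [IsProbabilityMeasure π]
    (hbind : π.bind (fun x => κ x) = π)
    {h : 𝒳 → ℝ} (hm : Measurable h)
    (hfin : ∫⁻ y, (‖h y‖₊ : ℝ≥0∞) ^ (2:ℝ) ∂π < ∞) :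
    ∀ᵐ x ∂π, Integrable h (κ x) := by
  have hmeas : Measurable fun y => (‖h y‖₊ : ℝ≥0∞) ^ (2:ℝ) :=
    (hm.nnnorm.coe_nnreal_ennreal).pow_const _
  have hfin2 : ∫⁻ x, (∫⁻ y, (‖h y‖₊ : ℝ≥0∞) ^ (2:ℝ) ∂κ x) ∂π < ∞ := by
    rw [← Measure.lintegral_bind κ.measurable.aemeasurable hmeas.aemeasurable, hbind]
    exact hfin
  have hae := ae_lt_top (Measurable.lintegral_kernel hmeas) hfin2.ne
  filter_upwards [hae] with x hx
  have hmem : MemLp h 2 (κ x) := by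
    refine ⟨hm.aestronglyMeasurable, ?_⟩
    rw [eLpNorm_eq_lintegral_rpow_enorm_toReal two_ne_zero ENNReal.ofNat_ne_top]
    simp only [ENNReal.toReal_ofNat]
    exact ENNReal.rpow_lt_top_of_nonneg (by norm_num) hx.ne
  exact hmem.integrable one_le_two

lemma aux_contr {𝒳 : Type*} [MeasurableSpace 𝒳] (κ : Kernel 𝒳 𝒳) [IsMarkovKernel κ]
    (π : Measure 𝒳) [IsProbabilityMeasure π]
    (hbind : π.bind (fun x => κ x) = π)
    {α : ℝ} (hα0 : 0 < α) {r : 𝒳 → ℝ}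
    (φ ψ Tφ Tψ : Lp ℝ 2 π)
    (hφ : (Tφ : 𝒳 → ℝ) =ᵐ[π] fun x => r x + α * ∫ y, (φ : 𝒳 → ℝ) y ∂(κ x))
    (hψ : (Tψ : 𝒳 → ℝ) =ᵐ[π] fun x => r x + α * ∫ y, (ψ : 𝒳 → ℝ) y ∂(κ x)) :
    ‖Tφ - Tψ‖ ≤ α * ‖φ - ψ‖ := by
  set φ' : 𝒳 → ℝ := (φ : 𝒳 → ℝ) with hφ'
  set ψ' : 𝒳 → ℝ := (ψ : 𝒳 → ℝ) with hψ'
  have hφm : Measurable φ' := (Lp.stronglyMeasurable φ).measurable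
  have hψm : Measurable ψ' := (Lp.stronglyMeasurable ψ).measurable
  set g : 𝒳 → ℝ := fun y => φ' y - ψ' y with hg
  have hgm : Measurable g := hφm.sub hψm
  have hgae : g =ᵐ[π] ((φ - ψ : Lp ℝ 2 π) : 𝒳 → ℝ) := (Lp.coeFn_sub φ ψ).symm
  -- finiteness of square lintegrals
  have hsq : ∀ (f : Lp ℝ 2 π), ∫⁻ y, (‖(f : 𝒳 → ℝ) y‖₊ : ℝ≥0∞) ^ (2:ℝ) ∂π < ∞ := by
    intro f
    have h1 := Lp.eLpNorm_lt_top f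
    rw [eLpNorm_eq_lintegral_rpow_enorm_toReal two_ne_zero ENNReal.ofNat_ne_top] at h1
    simp only [ENNReal.toReal_ofNat] at h1
    have := (ENNReal.rpow_lt_top_iff_of_pos (by norm_num : (0:ℝ) < 1/2)).mp h1
    exact this
  have hφint := aux_ae_int κ π hbind hφm (hsq φ)
  have hψint := aux_ae_int κ π hbind hψm (hsq ψ)
  -- a.e. identification of Tφ - Tψ
  have hae : ((Tφ - Tψ : Lp ℝ 2 π) : 𝒳 → ℝ) =ᵐ[π] fun x => α * ∫ y, g y ∂(κ x) := by
    filter_upwards [Lp.coeFn_sub Tφ Tψ, hφ, hψ, hφint, hψint] with x h1 h2 h3 h4 h5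
    rw [h1, Pi.sub_apply, h2, h3]
    simp only [hg]
    rw [integral_sub h4 h5]
    ring
  -- pointwise bound in ℝ≥0∞
  set B : 𝒳 → ℝ≥0∞ := fun x => (∫⁻ y, (‖g y‖₊ : ℝ≥0∞) ^ (2:ℝ) ∂κ x) ^ (1/2 : ℝ) with hB
  have hgm2 : Measurable fun y => (‖g y‖₊ : ℝ≥0∞) ^ (2:ℝ) :=
    (hgm.nnnorm.coe_nnreal_ennreal).pow_const _
  have hpt : ∀ x, (‖α * ∫ y, g y ∂(κ x)‖₊ : ℝ≥0∞) ≤ ENNReal.ofReal α * B x := by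
    intro x
    have h1 : (‖α * ∫ y, g y ∂(κ x)‖₊ : ℝ≥0∞)
        = ENNReal.ofReal α * (‖∫ y, g y ∂(κ x)‖₊ : ℝ≥0∞) := by
      rw [nnnorm_mul, ENNReal.coe_mul, ← enorm_eq_nnnorm α, Real.enorm_eq_ofReal hα0.le]
    rw [h1]
    refine mul_le_mul_right ?_ _
    refine le_trans (enorm_integral_le_lintegral_enorm _) ?_
    -- Cauchy-Schwarz: ∫⁻ ‖g‖ ≤ (∫⁻ ‖g‖²)^(1/2)
    have hcs := ENNReal.lintegral_mul_le_Lp_mul_Lq (κ x)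
      Real.HolderConjugate.two_two
      (hgm.nnnorm.coe_nnreal_ennreal).aemeasurable aemeasurable_const
      (f := fun y => (‖g y‖₊ : ℝ≥0∞)) (g := fun _ => (1:ℝ≥0∞))
    simp only [mul_one, ENNReal.one_rpow, lintegral_one, measure_univ, ENNReal.one_rpow] at hcs
    simp only [hB]
    simpa [one_div, enorm_eq_nnnorm] using hcs
  -- main norm estimate
  have hkey : eLpNorm ((Tφ - Tψ : Lp ℝ 2 π) : 𝒳 → ℝ) 2 π
      ≤ ENNReal.ofReal α * eLpNorm ((φ - ψ : Lp ℝ 2 π) : 𝒳 → ℝ) 2 π := by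
    rw [eLpNorm_congr_ae hae, eLpNorm_congr_ae hgae.symm,
      eLpNorm_eq_lintegral_rpow_enorm_toReal two_ne_zero ENNReal.ofNat_ne_top,
      eLpNorm_eq_lintegral_rpow_enorm_toReal two_ne_zero ENNReal.ofNat_ne_top]
    simp only [ENNReal.toReal_ofNat]
    have hmono : ∫⁻ x, (‖α * ∫ y, g y ∂(κ x)‖₊ : ℝ≥0∞) ^ (2:ℝ) ∂π
        ≤ ∫⁻ x, (ENNReal.ofReal α * B x) ^ (2:ℝ) ∂π :=
      lintegral_mono fun x => ENNReal.rpow_le_rpow (hpt x) (by norm_num)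
    have heq : ∫⁻ x, (ENNReal.ofReal α * B x) ^ (2:ℝ) ∂π
        = ENNReal.ofReal α ^ (2:ℝ) * ∫⁻ y, (‖g y‖₊ : ℝ≥0∞) ^ (2:ℝ) ∂π := by
      have : ∀ x, (ENNReal.ofReal α * B x) ^ (2:ℝ)
          = ENNReal.ofReal α ^ (2:ℝ) * ∫⁻ y, (‖g y‖₊ : ℝ≥0∞) ^ (2:ℝ) ∂κ x := by
        intro x
        rw [ENNReal.mul_rpow_of_nonneg _ _ (by norm_num), hB]
        congr 1
        rw [← ENNReal.rpow_mul]
        norm_num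
      simp_rw [this]
      rw [lintegral_const_mul _ (Measurable.lintegral_kernel hgm2),
        ← Measure.lintegral_bind κ.measurable.aemeasurable hgm2.aemeasurable, hbind]
    calc (∫⁻ x, (‖α * ∫ y, g y ∂(κ x)‖₊ : ℝ≥0∞) ^ (2:ℝ) ∂π) ^ (1/2:ℝ)
        ≤ (ENNReal.ofReal α ^ (2:ℝ) * ∫⁻ y, (‖g y‖₊ : ℝ≥0∞) ^ (2:ℝ) ∂π) ^ (1/2:ℝ) := by
          rw [← heq]; exact ENNReal.rpow_le_rpow hmono (by norm_num)
      _ = ENNReal.ofReal α * (∫⁻ y, (‖g y‖₊ : ℝ≥0∞) ^ (2:ℝ) ∂π) ^ (1/2:ℝ) := by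
          rw [ENNReal.mul_rpow_of_nonneg _ _ (by norm_num), ← ENNReal.rpow_mul]
          norm_num
  -- convert to real norms
  rw [Lp.norm_def, Lp.norm_def]
  have hfin : ENNReal.ofReal α * eLpNorm ((φ - ψ : Lp ℝ 2 π) : 𝒳 → ℝ) 2 π ≠ ∞ :=
    ENNReal.mul_ne_top ENNReal.ofReal_ne_top (Lp.eLpNorm_lt_top _).ne
  calc (eLpNorm ((Tφ - Tψ : Lp ℝ 2 π) : 𝒳 → ℝ) 2 π).toReal
      ≤ (ENNReal.ofReal α * eLpNorm ((φ - ψ : Lp ℝ 2 π) : 𝒳 → ℝ) 2 π).toReal :=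
        ENNReal.toReal_mono hfin hkey
    _ = α * (eLpNorm ((φ - ψ : Lp ℝ 2 π) : 𝒳 → ℝ) 2 π).toReal := by
        rw [ENNReal.toReal_mul, ENNReal.toReal_ofReal hα0.le]

set_option maxHeartbeats 2000000 in
/-- Let `C` be a nonempty closed convex subset of `L²(π)` with metric projection `P`, and let
`TL` be the Bellman operator `T φ = r + α ∫ φ(y) κ(·,dy)` acting on `L²(π)`, where `π` is
invariant under the Markov kernel `κ`. Then `P ∘ TL` has a unique fixed point `V̄ ∈ C`, and the
iterates `V_{k+1} = P (TL (V_k))` satisfy `‖V_k − V̄‖ ≤ α^k ‖V₀ − V̄‖`. -/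
theorem fixed_point_projection
    {𝒳 : Type*} [MeasurableSpace 𝒳]
    (κ : Kernel 𝒳 𝒳) [IsMarkovKernel κ]
    (π : Measure 𝒳) [IsProbabilityMeasure π]
    (hinv : ∀ B : Set 𝒳, MeasurableSet B → π B = ∫⁻ x, κ x B ∂π)
    (α : ℝ) (hα0 : 0 < α) (hα1 : α < 1)
    (r : 𝒳 → ℝ) (hr : Measurable r)
    (hr2 : Integrable (fun x => r x ^ 2) π)
    (TL : Lp ℝ 2 π → Lp ℝ 2 π)
    (hTL : ∀ φ : Lp ℝ 2 π,
      (TL φ : 𝒳 → ℝ) =ᵐ[π] fun x => r x + α * ∫ y, (φ : 𝒳 → ℝ) y ∂(κ x))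
    (C : Set (Lp ℝ 2 π)) (hCne : C.Nonempty) (hCclosed : IsClosed C) (hCconvex : Convex ℝ C)
    (P : Lp ℝ 2 π → Lp ℝ 2 π)
    (hP : ∀ y : Lp ℝ 2 π, P y ∈ C ∧ ∀ q ∈ C, ‖y - P y‖ ≤ ‖y - q‖) :
    (∃! Vbar : Lp ℝ 2 π, Vbar ∈ C ∧ P (TL Vbar) = Vbar) ∧
      ∀ Vbar : Lp ℝ 2 π, Vbar ∈ C → P (TL Vbar) = Vbar →
        ∀ V : ℕ → Lp ℝ 2 π, V 0 ∈ C → (∀ k : ℕ, V (k + 1) = P (TL (V k))) →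
          ∀ k : ℕ, ‖V k - Vbar‖ ≤ α ^ k * ‖V 0 - Vbar‖ := by
  have hbind : π.bind (fun x => κ x) = π := aux_bind κ π hinv
  have hTcontr : ∀ φ ψ : Lp ℝ 2 π, ‖TL φ - TL ψ‖ ≤ α * ‖φ - ψ‖ := fun φ ψ =>
    aux_contr κ π hbind hα0 φ ψ (TL φ) (TL ψ) (hTL φ) (hTL ψ)
  -- projection is nonexpansive
  haveI : Nonempty C := hCne.to_subtype
  have hproj : ∀ y : Lp ℝ 2 π, ∀ q ∈ C, ⟪y - P y, q - P y⟫ ≤ 0 := by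
    intro y
    have hbdd : BddBelow (Set.range fun w : C => ‖y - w‖) := by
      refine ⟨0, ?_⟩
      rintro b ⟨w, rfl⟩
      exact norm_nonneg _
    have hinf : ‖y - P y‖ = ⨅ w : C, ‖y - w‖ := by
      refine le_antisymm (le_ciInf fun w => (hP y).2 w w.2) ?_
      exact ciInf_le hbdd ⟨P y, (hP y).1⟩
    exact (norm_eq_iInf_iff_real_inner_le_zero hCconvex (hP y).1).mp hinf
  have hPnon : ∀ y z : Lp ℝ 2 π, ‖P y - P z‖ ≤ ‖y - z‖ := by
    intro y z
    have h1 := hproj y (P z) (hP z).1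
    have h2 := hproj z (P y) (hP y).1
    have hkey : ‖P y - P z‖ ^ 2 ≤ ⟪y - z, P y - P z⟫ := by
      have hexp : ⟪y - z, P y - P z⟫ - ‖P y - P z‖ ^ 2
          = (-⟪y - P y, P z - P y⟫) + (-⟪z - P z, P y - P z⟫) := by
        rw [← real_inner_self_eq_norm_sq]
        simp only [inner_sub_left, inner_sub_right]
        ring
      linarith
    have hcs := real_inner_le_norm (y - z) (P y - P z)
    nlinarith [norm_nonneg (P y - P z), norm_nonneg (y - z)]
  set f : Lp ℝ 2 π → Lp ℝ 2 π := fun x => P (TL x) with hfdef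
  have hcontr : ∀ x y : Lp ℝ 2 π, ‖f x - f y‖ ≤ α * ‖x - y‖ := fun x y =>
    (hPnon (TL x) (TL y)).trans (hTcontr x y)
  -- existence of fixed point via contracting map
  have hlip : LipschitzWith (⟨α, hα0.le⟩ : NNReal) f :=
    LipschitzWith.of_dist_le_mul fun x y => by
      rw [dist_eq_norm, dist_eq_norm]; exact hcontr x y
  have hK : (⟨α, hα0.le⟩ : NNReal) < 1 := by
    exact hα1
  have hCW : ContractingWith (⟨α, hα0.le⟩ : NNReal) f := ⟨hK, hlip⟩
  have : Nonempty (Lp ℝ 2 π) := ⟨0⟩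
  set Vb : Lp ℝ 2 π := ContractingWith.fixedPoint f hCW with hVb
  have hfix : f Vb = Vb := hCW.fixedPoint_isFixedPt
  have hVbC : Vb ∈ C := by rw [← hfix]; exact (hP (TL Vb)).1
  have huniq : ∀ y : Lp ℝ 2 π, f y = y → y = Vb := by
    intro y hy
    have h1 : ‖y - Vb‖ ≤ α * ‖y - Vb‖ := by
      calc ‖y - Vb‖ = ‖f y - f Vb‖ := by rw [hy, hfix]
        _ ≤ α * ‖y - Vb‖ := hcontr y Vb
    have h0 : ‖y - Vb‖ = 0 := by nlinarith [norm_nonneg (y - Vb)]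
    have := norm_eq_zero.mp h0
    exact sub_eq_zero.mp this
  constructor
  · exact ⟨Vb, ⟨hVbC, hfix⟩, fun y hy => huniq y hy.2⟩
  · intro Vbar hVbarC hVbarfix V hV0 hVk
    intro k
    induction k with
    | zero => simp
    | succ k ih =>
      have : ‖V (k + 1) - Vbar‖ ≤ α * ‖V k - Vbar‖ := by
        calc ‖V (k + 1) - Vbar‖ = ‖f (V k) - f Vbar‖ := by
              rw [hVk k, hfdef]; simp only []; rw [hVbarfix]
          _ ≤ α * ‖V k - Vbar‖ := hcontr (V k) Vbar
      calc ‖V (k + 1) - Vbar‖ ≤ α * ‖V k - Vbar‖ := this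
        _ ≤ α * (α ^ k * ‖V 0 - Vbar‖) := by
            exact mul_le_mul_of_nonneg_left ih hα0.le
        _ = α ^ (k + 1) * ‖V 0 - Vbar‖ := by ring
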